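/- Let n and d be positive integers, ℓ a Kupisch series of type Ã_{n-1}, f(i) = i - ℓ(i) - d + 1, and I = { i ∈ ℤ : (i mod n) ∈ J }. Then there exist an integer s ≥ 1 and an integer t such that f^s(i) = i + t·n for every i ∈ I, where f^s denotes the s-fold iterate of f. -/

import Mathlib

/-- The set of periodic points of the induced map `f̄ : ℤ/nℤ → ℤ/nℤ`. -/
def Jset (n : ℕ) (fbar : ZMod n → ZMod n) : Set (ZMod n) :=
  {j | ∃ N : ℕ, 1 ≤ N ∧ fbar^[N] j = j}

/-- The set of integers whose residue mod `n` lies in `J`. -/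
def Iset (n : ℕ) (fbar : ZMod n → ZMod n) : Set ℤ :=
  {i | (i : ZMod n) ∈ Jset n fbar}

/-- there exist `s ≥ 1` and `t ∈ ℤ` with `f^[s] i = i + t * n`
for all `i ∈ I`. -/
theorem f_iterate_translation_on_I (n d : ℕ) (hn : 0 < n) (hd : 0 < d) (ℓ : ℤ → ℤ)
    (hK1 : ∀ i : ℤ, 1 ≤ ℓ i) (hK2 : ∀ i : ℤ, ℓ i ≤ ℓ (i - 1) + 1)
    (hKper : ∀ i : ℤ, ℓ (i + n) = ℓ i)
    (f : ℤ → ℤ) (hf : ∀ i : ℤ, f i = i - ℓ i - d + 1)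
    (fbar : ZMod n → ZMod n)
    (hfbar : ∀ i : ℤ, fbar (i : ZMod n) = ((f i : ℤ) : ZMod n)) :
    ∃ s : ℕ, 1 ≤ s ∧ ∃ t : ℤ, ∀ i ∈ Iset n fbar, f^[s] i = i + t * n := by
  haveI : NeZero n := ⟨hn.ne'⟩
  -- f is monotone
  have hmono : Monotone f := by
    apply monotone_int_of_le_succ
    intro m
    have h2 := hK2 (m + 1)
    have e : m + 1 - 1 = m := by ring
    rw [e] at h2
    rw [hf m, hf (m + 1)]
    omega
  -- ℓ is periodic with all integer multiples of n
  have hlper : ∀ (k x : ℤ), ℓ (x + k * n) = ℓ x := by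
    intro k
    induction k using Int.induction_on with
    | zero => simp
    | succ k ih =>
      intro x
      have e : x + ((k : ℤ) + 1) * n = (x + k * n) + n := by ring
      rw [e, hKper, ih]
    | pred k ih =>
      intro x
      have e : (x + (-(k : ℤ) - 1) * n) + n = x + (-(k : ℤ)) * n := by ring
      rw [← hKper (x + (-(k : ℤ) - 1) * n), e, ih]
  have ftrans : ∀ (k x : ℤ), f (x + k * n) = f x + k * n := by
    intro k x
    rw [hf, hf, hlper]
    ring
  have fstrans : ∀ (m : ℕ) (k x : ℤ), f^[m] (x + k * n) = f^[m] x + k * n := by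
    intro m
    induction m with
    | zero => simp
    | succ m ih =>
      intro k x
      rw [Function.iterate_succ_apply, Function.iterate_succ_apply, ftrans, ih]
  -- compatibility of iterates with fbar
  have hcast : ∀ (m : ℕ) (i : ℤ), ((f^[m] i : ℤ) : ZMod n) = fbar^[m] (i : ZMod n) := by
    intro m
    induction m with
    | zero => intro i; rfl
    | succ m ih =>
      intro i
      rw [Function.iterate_succ_apply, Function.iterate_succ_apply, hfbar, ih]
  -- choose s
  set s := Finset.univ.lcm (fun j : ZMod n => max 1 (Function.minimalPeriod fbar j)) with hsdef
  have hs1 : 1 ≤ s := by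
    rcases Nat.eq_zero_or_pos s with h0 | h
    · exfalso
      rw [hsdef, Finset.lcm_eq_zero_iff] at h0
      obtain ⟨j, -, hj⟩ := h0
      have hj : max 1 (Function.minimalPeriod fbar j) = 0 := hj
      omega
    · exact h
  have hfix : ∀ j ∈ Jset n fbar, fbar^[s] j = j := by
    intro j hj
    obtain ⟨N, hN1, hNfix⟩ := hj
    have hper : Function.IsPeriodicPt fbar N j := hNfix
    have hpos : 0 < Function.minimalPeriod fbar j := hper.minimalPeriod_pos hN1
    have hdvd : Function.minimalPeriod fbar j ∣ s := by
      have : max 1 (Function.minimalPeriod fbar j) = Function.minimalPeriod fbar j := by omega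
      rw [hsdef, ← this]
      exact Finset.dvd_lcm (Finset.mem_univ j)
    exact (Function.isPeriodicPt_iff_minimalPeriod_dvd.mpr hdvd : _)
  -- mod n behaviour on I
  have hmod : ∀ i ∈ Iset n fbar, (n : ℤ) ∣ f^[s] i - i := by
    intro i hi
    have h1 : ((f^[s] i : ℤ) : ZMod n) = (i : ZMod n) := by
      rw [hcast s i, hfix _ hi]
    have : (((f^[s] i - i : ℤ)) : ZMod n) = 0 := by
      push_cast
      rw [h1]
      ring
    exact (ZMod.intCast_zmod_eq_zero_iff_dvd _ n).mp this
  -- key comparison lemma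
  have hle : ∀ i j : ℤ, (n : ℤ) ∣ f^[s] i - i → (n : ℤ) ∣ f^[s] j - j →
      f^[s] i - i ≤ f^[s] j - j := by
    intro i j hi hj
    set q := (j - i) / (n : ℤ) with hq
    set r := (j - i) % (n : ℤ) with hr
    have hnz : (n : ℤ) ≠ 0 := by exact_mod_cast hn.ne'
    have hr0 : 0 ≤ r := Int.emod_nonneg _ hnz
    have hrn : r < n := Int.emod_lt_of_pos _ (by exact_mod_cast hn)
    have hj' : j = (i + r) + q * n := by
      have := Int.mul_ediv_add_emod (j - i) (n : ℤ)
      rw [← hq, ← hr] at this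
      linarith
    have hkey : f^[s] j - j = f^[s] (i + r) - (i + r) := by
      rw [hj', fstrans]
      ring
    have hm : f^[s] i ≤ f^[s] (i + r) := (hmono.iterate s) (by linarith)
    by_contra hlt
    push_neg at hlt
    have hdvd : (n : ℤ) ∣ (f^[s] i - i) - (f^[s] j - j) := dvd_sub hi hj
    have hge := Int.le_of_dvd (by omega) hdvd
    omega
  by_cases hne : (Iset n fbar).Nonempty
  · obtain ⟨i0, hi0⟩ := hne
    obtain ⟨t0, ht0⟩ := hmod i0 hi0
    refine ⟨s, hs1, t0, ?_⟩
    intro i hi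
    have h1 := hle i i0 (hmod i hi) (hmod i0 hi0)
    have h2 := hle i0 i (hmod i0 hi0) (hmod i hi)
    have heq : f^[s] i - i = f^[s] i0 - i0 := le_antisymm h1 h2
    linear_combination heq + ht0
  · exact ⟨s, hs1, 0, fun i hi => absurd ⟨i, hi⟩ hne⟩
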